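/- arXiv:2407.11521 — 2 statements merged into one kernel-verified Lean document; each statement's English description precedes it below -/
import Mathlib

section
/- Let G be a simple graph on n vertices, G* its augmented graph with universal vertex u*, and M* a Moore–Penrose pseudoinverse of L_{G*}. Then the forest index of G satisfies R_f(G) = n·trace(M*) − (n+1)·M*[u*,u*]. -/
open Matrix BigOperators

/-- `M` is a Moore–Penrose pseudoinverse of `L`. -/
def IsMoorePenrose {n : Type*} [Fintype n] (L M : Matrix n n ℝ) : Prop :=
  L * M * L = L ∧ M * L * M = M ∧ (L * M)ᵀ = L * M ∧ (M * L)ᵀ = M * L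

/-- The augmented graph `G*` of `G`: a new universal vertex `none` is joined
to every vertex of `G`. -/
def augment {V : Type*} (G : SimpleGraph V) : SimpleGraph (Option V) :=
  SimpleGraph.fromRel fun x y =>
    (∃ u v, x = some u ∧ y = some v ∧ G.Adj u v) ∨ x = none ∨ y = none

instance augmentAdjDecidable {V : Type*} [Fintype V] [DecidableEq V]
    (G : SimpleGraph V) [DecidableRel G.Adj] : DecidableRel (augment G).Adj :=
  fun x y => decidable_of_iff' _ (SimpleGraph.fromRel_adj _ x y)

lemma augment_adj_some_some {V : Type*} (G : SimpleGraph V) (a b : V) :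
    (augment G).Adj (some a) (some b) ↔ G.Adj a b := by
  simp only [augment, SimpleGraph.fromRel_adj]
  constructor
  · rintro ⟨hne, (⟨u,v,hu,hv,h⟩|h|h)|(⟨u,v,hu,hv,h⟩|h|h)⟩ <;> simp_all <;> exact h.symm
  · intro h
    exact ⟨by simpa using h.ne, Or.inl (Or.inl ⟨a, b, rfl, rfl, h⟩)⟩

lemma augment_adj_some_none {V : Type*} (G : SimpleGraph V) (a : V) :
    (augment G).Adj (some a) none := by
  simp [augment, SimpleGraph.fromRel_adj]

lemma lap_mulVec {W : Type*} [Fintype W] [DecidableEq W] (H : SimpleGraph W)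
    [DecidableRel H.Adj] (x : W → ℝ) (i : W) :
    (H.lapMatrix ℝ *ᵥ x) i = ∑ j, if H.Adj i j then x i - x j else 0 := by
  simp_rw [SimpleGraph.lapMatrix_mulVec_apply, SimpleGraph.degree_eq_sum_if_adj,
    SimpleGraph.neighborFinset_eq_filter, Finset.sum_filter, Finset.sum_mul, ite_mul, one_mul,
    zero_mul, ← Finset.sum_sub_distrib, ite_sub_ite, sub_zero]

lemma mulVec_pair {W : Type*} [Fintype W] [DecidableEq W] (A : Matrix W W ℝ) (u v w : W) :
    (A *ᵥ fun j => (if j = u then (1:ℝ) else 0) - (if j = v then 1 else 0)) w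
      = A w u - A w v := by
  simp [mulVec, dotProduct, mul_sub, mul_ite, mul_one, mul_zero, Finset.sum_sub_distrib,
    Finset.sum_ite_eq']

lemma pair_dot {W : Type*} [Fintype W] [DecidableEq W] (u v : W) (g : W → ℝ) :
    (fun j => (if j = u then (1:ℝ) else 0) - (if j = v then 1 else 0)) ⬝ᵥ g
      = g u - g v := by
  simp [dotProduct, sub_mul, ite_mul, one_mul, zero_mul, Finset.sum_sub_distrib,
    Finset.sum_ite_eq']

lemma sum_pairs {n : ℕ} (M : Matrix (Option (Fin n)) (Option (Fin n)) ℝ)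
    (hrowM : ∀ i, ∑ j, M i j = 0) (hcolM : ∀ j, ∑ i, M i j = 0) :
    ∑ u : Fin n, ∑ v ∈ Finset.Ioi u,
      (M (some u) (some u) - M (some u) (some v) - M (some v) (some u)
        + M (some v) (some v))
      = (n : ℝ) * M.trace - (n + 1) * M none none := by
  classical
  let t : Fin n → Fin n → ℝ := fun u v =>
    M (some u) (some u) - M (some u) (some v) - M (some v) (some u) + M (some v) (some v)
  show ∑ u : Fin n, ∑ v ∈ Finset.Ioi u, t u v = _
  have htsymm : ∀ u v, t v u = t u v := by intro u v; simp only [t]; ring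
  have htdiag : ∀ u, t u u = 0 := by intro u; simp only [t]; ring
  have htr : M.trace = M none none + ∑ w, M (some w) (some w) := by
    simp [Matrix.trace, Matrix.diag, Fintype.sum_option]
  have hrow' : ∀ u : Fin n, ∑ v, M (some u) (some v) = -(M (some u) none) := by
    intro u
    have := hrowM (some u)
    rw [Fintype.sum_option] at this
    linarith
  have hcol' : ∀ u : Fin n, ∑ v, M (some v) (some u) = -(M none (some u)) := by
    intro u
    have := hcolM (some u)
    rw [Fintype.sum_option] at this
    linarith
  have hrn : ∑ v, M none (some v) = -(M none none) := by
    have := hrowM none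
    rw [Fintype.sum_option] at this
    linarith
  have hcn : ∑ v, M (some v) none = -(M none none) := by
    have := hcolM none
    rw [Fintype.sum_option] at this
    linarith
  have hsum_t : ∀ u, ∑ v, t u v = (n : ℝ) * M (some u) (some u)
      + M (some u) none + M none (some u) + ∑ w, M (some w) (some w) := by
    intro u
    have e : ∑ v, t u v = (∑ _v : Fin n, M (some u) (some u))
        - (∑ v, M (some u) (some v)) - (∑ v, M (some v) (some u))
        + ∑ v, M (some v) (some v) := by
      rw [Finset.sum_add_distrib, Finset.sum_sub_distrib, Finset.sum_sub_distrib]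
    rw [e, hrow' u, hcol' u, Finset.sum_const, Finset.card_univ, Fintype.card_fin,
      nsmul_eq_mul]
    ring
  have htot : ∑ u, ∑ v, t u v
      = 2 * ((n : ℝ) * ∑ w, M (some w) (some w)) - 2 * M none none := by
    simp_rw [hsum_t]
    rw [Finset.sum_add_distrib, Finset.sum_add_distrib, Finset.sum_add_distrib,
      hcn, hrn, ← Finset.mul_sum, Finset.sum_const, Finset.card_univ, Fintype.card_fin,
      nsmul_eq_mul]
    ring
  have hIoi : ∀ u : Fin n, ∑ v ∈ Finset.Ioi u, t u v = ∑ v, if u < v then t u v else 0 := by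
    intro u
    rw [show Finset.Ioi u = Finset.univ.filter (fun v => u < v) by ext v; simp,
      Finset.sum_filter]
  have h2' : ∑ u : Fin n, ∑ v, (if u < v then t u v else 0)
      = ∑ u : Fin n, ∑ v, (if v < u then t u v else 0) := by
    rw [Finset.sum_comm]
    refine Finset.sum_congr rfl fun b _ => Finset.sum_congr rfl fun a _ => ?_
    exact if_congr Iff.rfl (htsymm b a) rfl
  have h3' : ∀ u v : Fin n, (if u < v then t u v else 0) + (if v < u then t u v else 0)
      = t u v := by
    intro u v
    rcases lt_trichotomy u v with h | h | h
    · rw [if_pos h, if_neg (asymm h), add_zero]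
    · subst h; simp [htdiag]
    · rw [if_neg (asymm h), if_pos h, zero_add]
  have hsplit : ∑ u : Fin n, ∑ v, t u v
      = (∑ u : Fin n, ∑ v, if u < v then t u v else 0)
        + (∑ u : Fin n, ∑ v, if v < u then t u v else 0) := by
    rw [← Finset.sum_add_distrib]
    refine Finset.sum_congr rfl fun u _ => ?_
    rw [← Finset.sum_add_distrib]
    exact Finset.sum_congr rfl fun v _ => (h3' u v).symm
  have hdouble : 2 * (∑ u : Fin n, ∑ v ∈ Finset.Ioi u, t u v) = ∑ u, ∑ v, t u v := by
    simp_rw [hIoi]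
    rw [two_mul]
    nth_rewrite 2 [h2']
    exact hsplit.symm
  have hPT : ∑ u : Fin n, ∑ v ∈ Finset.Ioi u, t u v
      = (n : ℝ) * (∑ w, M (some w) (some w)) - M none none := by
    linarith [hdouble, htot]
  calc ∑ u : Fin n, ∑ v ∈ Finset.Ioi u, t u v
      = (n : ℝ) * (∑ w, M (some w) (some w)) - M none none := hPT
    _ = (n : ℝ) * (M none none + ∑ w, M (some w) (some w)) - ((n : ℝ) + 1) * M none none := by
        ring
    _ = (n : ℝ) * M.trace - ((n : ℝ) + 1) * M none none := by rw [htr]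

theorem forest_index_eq_augmented_trace {n : ℕ} (G : SimpleGraph (Fin n))
    [DecidableRel G.Adj] (M : Matrix (Option (Fin n)) (Option (Fin n)) ℝ)
    (hM : IsMoorePenrose ((augment G).lapMatrix ℝ) M) :
    ∑ u : Fin n, ∑ v ∈ Finset.Ioi u,
        ((G.lapMatrix ℝ + 1)⁻¹ u u - 2 * (G.lapMatrix ℝ + 1)⁻¹ u v +
          (G.lapMatrix ℝ + 1)⁻¹ v v) =
      (n : ℝ) * M.trace - (n + 1) * M none none := by
  classical
  obtain ⟨h1, h2, h3, h4⟩ := hM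
  set L : Matrix (Fin n) (Fin n) ℝ := G.lapMatrix ℝ with hLdef
  set Ls : Matrix (Option (Fin n)) (Option (Fin n)) ℝ := (augment G).lapMatrix ℝ with hLsdef
  have hLsym : Lᵀ = L := G.isSymm_lapMatrix (R := ℝ)
  have hLssym : Lsᵀ = Ls := (augment G).isSymm_lapMatrix (R := ℝ)
  have hpd : (L + 1).PosDef :=
    Matrix.PosDef.posSemidef_add (SimpleGraph.posSemidef_lapMatrix ℝ G) Matrix.PosDef.one
  have hdet : IsUnit (L + 1).det := isUnit_iff_ne_zero.mpr hpd.det_pos.ne'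
  set Om : Matrix (Fin n) (Fin n) ℝ := (L + 1)⁻¹ with hOmdef
  have hOm1 : (L + 1) * Om = 1 := Matrix.mul_nonsing_inv _ hdet
  have hOm2 : Om * (L + 1) = 1 := Matrix.nonsing_inv_mul _ hdet
  have hOmsym : Omᵀ = Om := by
    rw [hOmdef, Matrix.transpose_nonsing_inv, Matrix.transpose_add, hLsym, Matrix.transpose_one]
  have hOmsym' : ∀ i j, Om j i = Om i j := fun i j => by
    have := congrFun (congrFun hOmsym j) i
    simpa [Matrix.transpose_apply] using this.symm
  -- row and column sums of Om are 1
  have hones : (L + 1) *ᵥ (fun _ => (1:ℝ)) = fun _ => (1:ℝ) := by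
    rw [Matrix.add_mulVec, hLdef, G.lapMatrix_mulVec_const_eq_zero, Matrix.one_mulVec,
      zero_add]
  have hOmones : Om *ᵥ (fun _ => (1:ℝ)) = fun _ => (1:ℝ) := by
    conv_lhs => rw [← hones, Matrix.mulVec_mulVec, hOm2, Matrix.one_mulVec]
  have hrowOm : ∀ i, ∑ j, Om i j = 1 := fun i => by
    have := congrFun hOmones i
    simpa [Matrix.mulVec, dotProduct] using this
  have hcolOm : ∀ j, ∑ i, Om i j = 1 := fun j => by
    simp_rw [fun i => hOmsym' j i]
    exact hrowOm j
  -- row and column sums of M are 0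
  have hLs1 : Ls *ᵥ (fun _ => (1:ℝ)) = 0 := (augment G).lapMatrix_mulVec_const_eq_zero
  have hLsM : (Ls * M) *ᵥ (fun _ => (1:ℝ)) = 0 := by
    have e : Ls * M = Mᵀ * Ls := by
      conv_lhs => rw [← h3]
      rw [Matrix.transpose_mul, hLssym]
    rw [e, ← Matrix.mulVec_mulVec, hLs1, Matrix.mulVec_zero]
  have hMrow : M *ᵥ (fun _ => (1:ℝ)) = 0 := by
    conv_lhs => rw [← h2, Matrix.mul_assoc, ← Matrix.mulVec_mulVec, hLsM, Matrix.mulVec_zero]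
  have hLsMT : (Ls * Mᵀ) *ᵥ (fun _ => (1:ℝ)) = 0 := by
    have e : Ls * Mᵀ = M * Ls := by
      calc Ls * Mᵀ = (M * Lsᵀ)ᵀ := by rw [Matrix.transpose_mul, Matrix.transpose_transpose]
        _ = (M * Ls)ᵀ := by rw [hLssym]
        _ = M * Ls := h4
    rw [e, ← Matrix.mulVec_mulVec, hLs1, Matrix.mulVec_zero]
  have h2T : Mᵀ * Ls * Mᵀ = Mᵀ := by
    have := congrArg Matrix.transpose h2
    simpa [Matrix.transpose_mul, hLssym, Matrix.mul_assoc] using this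
  have hMcol : Mᵀ *ᵥ (fun _ => (1:ℝ)) = 0 := by
    conv_lhs => rw [← h2T, Matrix.mul_assoc, ← Matrix.mulVec_mulVec, hLsMT, Matrix.mulVec_zero]
  have hrowM : ∀ i, ∑ j, M i j = 0 := fun i => by
    have := congrFun hMrow i
    simpa [Matrix.mulVec, dotProduct] using this
  have hcolM : ∀ j, ∑ i, M i j = 0 := fun j => by
    have := congrFun hMcol j
    simpa [Matrix.mulVec, dotProduct] using this
  -- the key pointwise identity
  have key : ∀ u v : Fin n, Om u u - 2 * Om u v + Om v v
      = M (some u) (some u) - M (some u) (some v) - M (some v) (some u)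
        + M (some v) (some v) := by
    intro u v
    set z : Fin n → ℝ := fun j => (if j = u then (1:ℝ) else 0) - (if j = v then 1 else 0)
      with hzdef
    set y : Fin n → ℝ := Om *ᵥ z with hydef
    have hy : ∀ w, y w = Om w u - Om w v := fun w => mulVec_pair Om u v w
    set z' : Option (Fin n) → ℝ :=
      fun o => (if o = some u then (1:ℝ) else 0) - (if o = some v then 1 else 0) with hz'def
    set x : Option (Fin n) → ℝ := fun o => o.elim 0 y with hxdef
    have hysum : ∑ b, y b = 0 := by
      simp_rw [hy]
      rw [Finset.sum_sub_distrib, hcolOm u, hcolOm v, sub_self]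
    have hz'some : ∀ a, z' (some a) = z a := by
      intro a; simp [hz'def, hzdef]
    have hz'none : z' none = 0 := by simp [hz'def]
    have hLp1y : (L + 1) *ᵥ y = z := by
      rw [hydef, Matrix.mulVec_mulVec, hOm1, Matrix.one_mulVec]
    have hx : Ls *ᵥ x = z' := by
      funext o
      cases o with
      | none =>
        rw [hLsdef, lap_mulVec, Fintype.sum_option]
        have hadj : ¬ (augment G).Adj none none := SimpleGraph.irrefl _
        have hadj2 : ∀ b, (augment G).Adj none (some b) :=
          fun b => (augment_adj_some_none G b).symm
        simp only [hadj, if_false, hadj2, if_true, hz'none, hxdef, Option.elim]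
        simp only [zero_sub, Finset.sum_neg_distrib, hysum, neg_zero, zero_add]
      | some a =>
        rw [hLsdef, lap_mulVec, Fintype.sum_option]
        have hs : ∀ b, ((augment G).Adj (some a) (some b)) = (G.Adj a b) := by
          intro b; rw [augment_adj_some_some]
        simp only [augment_adj_some_none, if_true, hs, hxdef, Option.elim]
        have hlv : ∑ b, (if G.Adj a b then y a - y b else 0) = (L *ᵥ y) a :=
          (lap_mulVec G y a).symm
        rw [hlv, hz'some]
        have := congrFun hLp1y a
        rw [Matrix.add_mulVec, Matrix.one_mulVec] at this
        simp only [Pi.add_apply] at this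
        rw [sub_zero, ← this]
        ring
    -- quadratic form computation
    have hq1 : z' ⬝ᵥ (M *ᵥ z') = M (some u) (some u) - M (some u) (some v)
        - M (some v) (some u) + M (some v) (some v) := by
      have hmz : ∀ o, (M *ᵥ z') o = M o (some u) - M o (some v) :=
        fun o => mulVec_pair M (some u) (some v) o
      rw [hz'def, pair_dot]
      rw [hmz, hmz]
      ring
    have hq2 : z' ⬝ᵥ (M *ᵥ z') = x ⬝ᵥ z' := by
      have hvm : Ls *ᵥ x = x ᵥ* Ls := by
        rw [← hLssym, Matrix.mulVec_transpose, hLssym]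
      conv_lhs => rw [← hx]
      rw [Matrix.mulVec_mulVec, hvm, ← dotProduct_mulVec, Matrix.mulVec_mulVec,
        ← Matrix.mul_assoc, h1, hx]
    have hq3 : x ⬝ᵥ z' = y u - y v := by
      rw [dotProduct, Fintype.sum_option]
      have h0 : x none * z' none = 0 := by rw [hz'none]; ring
      rw [h0, zero_add]
      have he : ∀ a, x (some a) * z' (some a) = z a * y a := by
        intro a; rw [hz'some]; simp only [hxdef, Option.elim]; ring
      simp_rw [he]
      have := pair_dot u v y
      simpa [dotProduct, hzdef] using this
    have h5 := hq1.symm.trans (hq2.trans hq3)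
    rw [hy u, hy v] at h5
    have h6 := hOmsym' u v
    linarith
  calc ∑ u : Fin n, ∑ v ∈ Finset.Ioi u, (Om u u - 2 * Om u v + Om v v)
      = ∑ u : Fin n, ∑ v ∈ Finset.Ioi u,
          (M (some u) (some u) - M (some u) (some v) - M (some v) (some u)
            + M (some v) (some v)) :=
        Finset.sum_congr rfl fun u _ => Finset.sum_congr rfl fun v _ => key u v
    _ = (n : ℝ) * M.trace - (n + 1) * M none none := sum_pairs M hrowM hcolM
end

section
/- Let G be a connected simple graph, {a,b} an edge of G such that G' = G − {a,b} is also connected, M a Moore–Penrose pseudoinverse of L_G, and r = M[a,a] − 2·M[a,b] + M[b,b] the effective resistance of the edge. Then r ≠ 1, and the matrix N = M + (1/(1 − r))·M(e_a − e_b)(e_a − e_b)ᵀM is a Moore–Penrose pseudoinverse of L_{G'} = L_G − (e_a − e_b)(e_a − e_b)ᵀ. -/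
open Matrix BigOperators

instance deleteEdgeAdjDecidable {V : Type*} [DecidableEq V]
    (G : SimpleGraph V) [DecidableRel G.Adj] (a b : V) :
    DecidableRel (G.deleteEdges {s(a, b)}).Adj := fun x y =>
  decidable_of_iff (G.Adj x y ∧ ¬s(x, y) = s(a, b)) (by simp)

section Helpers
variable {n : Type*} [Fintype n]

lemma mp_unique (L M₁ M₂ : Matrix n n ℝ)
    (h₁ : IsMoorePenrose L M₁) (h₂ : IsMoorePenrose L M₂) : M₁ = M₂ := by
  obtain ⟨a₁, b₁, c₁, d₁⟩ := h₁
  obtain ⟨a₂, b₂, c₂, d₂⟩ := h₂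
  have e : L * M₁ = L * M₂ := by
    calc L * M₁ = L * M₂ * L * M₁ := by rw [a₂]
    _ = (L * M₂) * (L * M₁) := by rw [Matrix.mul_assoc]
    _ = (L * M₂)ᵀ * (L * M₁)ᵀ := by rw [c₂, c₁]
    _ = ((L * M₁) * (L * M₂))ᵀ := by rw [← Matrix.transpose_mul]
    _ = (L * M₁ * L * M₂)ᵀ := by rw [Matrix.mul_assoc (L * M₁)]
    _ = (L * M₂)ᵀ := by rw [a₁]
    _ = L * M₂ := c₂
  have f : M₁ * L = M₂ * L := by
    calc M₁ * L = M₁ * (L * M₂ * L) := by rw [a₂]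
    _ = (M₁ * L) * (M₂ * L) := by simp only [Matrix.mul_assoc]
    _ = (M₁ * L)ᵀ * (M₂ * L)ᵀ := by rw [d₁, d₂]
    _ = ((M₂ * L) * (M₁ * L))ᵀ := by rw [← Matrix.transpose_mul]
    _ = (M₂ * (L * M₁ * L))ᵀ := by simp only [Matrix.mul_assoc]
    _ = (M₂ * L)ᵀ := by rw [a₁]
    _ = M₂ * L := d₂
  calc M₁ = M₁ * L * M₁ := b₁.symm
  _ = M₂ * L * M₁ := by rw [f]
  _ = M₂ * (L * M₁) := by rw [Matrix.mul_assoc]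
  _ = M₂ * (L * M₂) := by rw [e]
  _ = M₂ * L * M₂ := by rw [← Matrix.mul_assoc]
  _ = M₂ := b₂

lemma mp_symm (L M : Matrix n n ℝ) (hL : Lᵀ = L) (hM : IsMoorePenrose L M) : Mᵀ = M := by
  obtain ⟨a₁, b₁, c₁, d₁⟩ := hM
  have h3 : L * Mᵀ = M * L := by
    calc L * Mᵀ = Lᵀ * Mᵀ := by rw [hL]
    _ = (M * L)ᵀ := by rw [← Matrix.transpose_mul]
    _ = M * L := d₁
  have h4 : Mᵀ * L = L * M := by
    calc Mᵀ * L = Mᵀ * Lᵀ := by rw [hL]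
    _ = (L * M)ᵀ := by rw [← Matrix.transpose_mul]
    _ = L * M := c₁
  refine mp_unique L Mᵀ M ⟨?_, ?_, ?_, ?_⟩ ⟨a₁, b₁, c₁, d₁⟩
  · have : L * Mᵀ * L = (L * M * L)ᵀ := by
      simp only [Matrix.transpose_mul, Matrix.transpose_transpose, Matrix.mul_assoc, hL]
    rw [this, a₁, hL]
  · have : Mᵀ * L * Mᵀ = (M * L * M)ᵀ := by
      simp only [Matrix.transpose_mul, Matrix.transpose_transpose, Matrix.mul_assoc, hL]
    rw [this, b₁]
  · rw [h3]; exact d₁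
  · rw [h4]; exact c₁

variable [DecidableEq n]

lemma exists_mulVec_eq (L : Matrix n n ℝ) (hL : Lᵀ = L) (w : n → ℝ)
    (hw : ∀ x, L *ᵥ x = 0 → w ⬝ᵥ x = 0) : ∃ z, L *ᵥ z = w := by
  have hherm : L.IsHermitian := by
    rw [Matrix.IsHermitian, Matrix.conjTranspose]
    ext i j; simpa [Matrix.map, starRingEnd_apply] using congrFun (congrFun hL i) j
  have hsym : (Matrix.toEuclideanLin L).IsSymmetric :=
    Matrix.isHermitian_iff_isSymmetric.mp hherm
  set T := Matrix.toEuclideanLin L with hT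
  have key : (LinearMap.range T)ᗮ ≤ LinearMap.ker T := by
    intro x hx
    rw [LinearMap.mem_ker]
    rw [← inner_self_eq_zero (𝕜 := ℝ)]
    rw [hsym x (T x), real_inner_comm]
    exact (Submodule.mem_orthogonal _ _).mp hx (T (T x)) ⟨T x, rfl⟩
  have hrange : (LinearMap.ker T)ᗮ ≤ LinearMap.range T := by
    have h2 := Submodule.orthogonal_le key
    rwa [Submodule.orthogonal_orthogonal (LinearMap.range T)] at h2
  have hwmem : (WithLp.equiv 2 (n → ℝ)).symm w ∈ (LinearMap.ker T)ᗮ := by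
    rw [Submodule.mem_orthogonal]
    intro u hu
    rw [LinearMap.mem_ker] at hu
    have hu' : L *ᵥ (WithLp.equiv 2 (n → ℝ)) u = 0 := by
      have := congrArg (WithLp.equiv 2 (n → ℝ)) hu
      simpa [T, Matrix.ofLp_toEuclideanLin_apply] using this
    have := hw _ hu'
    have h0 : ∑ i, w i * u i = 0 := by simpa [dotProduct, WithLp.equiv] using this
    rw [real_inner_comm]
    simpa [PiLp.inner_apply, WithLp.equiv, mul_comm] using h0
  obtain ⟨z, hz⟩ := hrange hwmem
  refine ⟨(WithLp.equiv 2 (n → ℝ)) z, ?_⟩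
  have := congrArg (WithLp.equiv 2 (n → ℝ)) hz
  simpa [T, Matrix.ofLp_toEuclideanLin_apply] using this

lemma mul_vecMulVec (A : Matrix n n ℝ) (u v : n → ℝ) :
    A * Matrix.vecMulVec u v = Matrix.vecMulVec (A *ᵥ u) v := by
  ext i j
  simp only [Matrix.mul_apply, Matrix.vecMulVec_apply, Matrix.mulVec, dotProduct,
    Finset.sum_mul]
  exact Finset.sum_congr rfl fun k _ => by ring

lemma vecMulVec_mul (u v : n → ℝ) (A : Matrix n n ℝ) :
    Matrix.vecMulVec u v * A = Matrix.vecMulVec u (v ᵥ* A) := by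
  ext i j
  simp only [Matrix.mul_apply, Matrix.vecMulVec_apply, Matrix.vecMul, dotProduct,
    Finset.mul_sum]
  exact Finset.sum_congr rfl fun k _ => by ring

lemma vecMulVec_mul_vecMulVec (u v x y : n → ℝ) :
    Matrix.vecMulVec u v * Matrix.vecMulVec x y = (v ⬝ᵥ x) • Matrix.vecMulVec u y := by
  ext i j
  simp only [Matrix.mul_apply, Matrix.vecMulVec_apply, Matrix.smul_apply, smul_eq_mul,
    dotProduct, Finset.sum_mul]
  exact Finset.sum_congr rfl fun k _ => by ring

lemma vecMulVec_mulVec (u v x : n → ℝ) :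
    Matrix.vecMulVec u v *ᵥ x = (v ⬝ᵥ x) • u := by
  ext i
  simp only [Matrix.mulVec, Matrix.vecMulVec_apply, dotProduct, Pi.smul_apply,
    smul_eq_mul, Finset.sum_mul]
  exact Finset.sum_congr rfl fun k _ => by ring

end Helpers

section Lap
variable {V : Type*} [Fintype V] [DecidableEq V]

lemma row_sum_lap (G : SimpleGraph V) [DecidableRel G.Adj] (i : V) :
    ∑ j, G.lapMatrix ℝ i j = 0 := by
  have := congrFun (G.lapMatrix_mulVec_const_eq_zero (R := ℝ)) i
  simpa [Matrix.mulVec, dotProduct] using this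

lemma sum_w (a b : V) : ∑ j, (Pi.single a 1 - Pi.single b 1 : V → ℝ) j = 0 := by
  simp [Finset.sum_sub_distrib]

lemma lap_delete (G : SimpleGraph V) [DecidableRel G.Adj] (a b : V) (hab : G.Adj a b) :
    (G.deleteEdges {s(a, b)}).lapMatrix ℝ =
      G.lapMatrix ℝ - Matrix.vecMulVec ((Pi.single a 1 - Pi.single b 1 : V → ℝ))
        ((Pi.single a 1 - Pi.single b 1 : V → ℝ)) := by
  set w : V → ℝ := Pi.single a 1 - Pi.single b 1 with hw
  have hne : a ≠ b := hab.ne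
  have hoff : ∀ i j, i ≠ j → (G.deleteEdges {s(a, b)}).lapMatrix ℝ i j
      = G.lapMatrix ℝ i j - w i * w j := by
    intro i j hij
    have hwa : ∀ k, w k = (if k = a then (1:ℝ) else 0) - (if k = b then 1 else 0) := by
      intro k; simp [hw, Pi.single_apply]
    by_cases hcase : (i = a ∧ j = b) ∨ (i = b ∧ j = a)
    · rcases hcase with ⟨hia, hjb⟩ | ⟨hib, hja⟩
      · have hadjij : G.Adj i j := by rw [hia, hjb]; exact hab
        have hadj' : ¬ (G.deleteEdges {s(a, b)}).Adj i j := by simp [hia, hjb]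
        have hwij : w i * w j = -1 := by
          rw [hwa, hwa, hia, hjb]; simp [hne, hne.symm]
        rw [hwij]
        simp only [SimpleGraph.lapMatrix, SimpleGraph.degMatrix, SimpleGraph.adjMatrix_apply,
          Matrix.sub_apply, Matrix.of_apply, Matrix.diagonal_apply_ne _ hij, hadjij, if_true,
          SimpleGraph.deleteEdges_adj]
        have : ¬ (G.deleteEdges {s(a, b)}).Adj i j := hadj'
        simp only [SimpleGraph.deleteEdges_adj] at this
        simp [this, hadjij]
        tauto
      · have hadjij : G.Adj i j := by rw [hib, hja]; exact hab.symm
        have hadj' : ¬ (G.deleteEdges {s(a, b)}).Adj i j := by simp [hib, hja, Sym2.eq_swap]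
        have hwij : w i * w j = -1 := by
          rw [hwa, hwa, hib, hja]; simp [hne, hne.symm]
        rw [hwij]
        simp only [SimpleGraph.lapMatrix, SimpleGraph.degMatrix, SimpleGraph.adjMatrix_apply,
          Matrix.sub_apply, Matrix.of_apply, Matrix.diagonal_apply_ne _ hij, hadjij, if_true,
          SimpleGraph.deleteEdges_adj]
        have : ¬ (G.deleteEdges {s(a, b)}).Adj i j := hadj'
        simp only [SimpleGraph.deleteEdges_adj] at this
        simp [this, hadjij]
        tauto
    · push_neg at hcase
      have hwij : w i * w j = 0 := by
        rw [hwa, hwa]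
        by_cases hia : i = a <;> by_cases hib : i = b <;> by_cases hja : j = a <;>
          by_cases hjb : j = b <;> simp_all
      have hadj' : (G.deleteEdges {s(a, b)}).Adj i j ↔ G.Adj i j := by
        simp only [SimpleGraph.deleteEdges_adj, Set.mem_singleton_iff, Sym2.eq, Sym2.rel_iff',
          Prod.mk.injEq, Prod.swap_prod_mk]
        constructor
        · exact fun h => h.1
        · intro h
          refine ⟨h, ?_⟩
          rintro (⟨rfl, rfl⟩ | ⟨rfl, rfl⟩)
          · exact (hcase.1 rfl) rfl
          · exact (hcase.2 rfl) rfl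
      rw [hwij]
      simp only [SimpleGraph.lapMatrix, SimpleGraph.degMatrix, SimpleGraph.adjMatrix_apply,
        Matrix.sub_apply, Matrix.of_apply, hij, if_false, SimpleGraph.deleteEdges_adj,
        Set.mem_singleton_iff, Sym2.eq, Sym2.rel_iff', Prod.mk.injEq, Prod.swap_prod_mk, not_or,
        not_and, sub_zero]
      have hcond : (G.Adj i j ∧ (i = a → ¬j = b) ∧ (i = b → ¬j = a)) ↔ G.Adj i j := by tauto
      simp only [hcond, Matrix.diagonal_apply_ne _ hij]
  ext i j
  by_cases hij : i = j
  · subst hij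
    have h1 : ∀ (A : Matrix V V ℝ), A i i = ∑ j, A i j - ∑ j ∈ Finset.univ.erase i, A i j := by
      intro A
      rw [← Finset.add_sum_erase _ _ (Finset.mem_univ i)]
      ring
    rw [h1 ((G.deleteEdges {s(a, b)}).lapMatrix ℝ), h1 (G.lapMatrix ℝ - Matrix.vecMulVec w w)]
    congr 1
    · rw [row_sum_lap]
      have : ∑ j, (G.lapMatrix ℝ - Matrix.vecMulVec w w) i j
          = ∑ j, G.lapMatrix ℝ i j - w i * ∑ j, w j := by
        simp [Finset.sum_sub_distrib, Matrix.vecMulVec_apply, Finset.mul_sum]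
      rw [this, row_sum_lap, sum_w]
      ring
    · refine Finset.sum_congr rfl fun j hj => ?_
      have := hoff i j (Finset.ne_of_mem_erase hj).symm
      simpa [Matrix.vecMulVec_apply] using this
  · have := hoff i j hij
    simpa [Matrix.vecMulVec_apply] using this

end Lap

theorem sherman_morrison_update_non_bridge {V : Type*} [Fintype V] [DecidableEq V]
    (G : SimpleGraph V) [DecidableRel G.Adj] (hG : G.Connected)
    (a b : V) (hab : G.Adj a b) (hG' : (G.deleteEdges {s(a, b)}).Connected)
    (M : Matrix V V ℝ) (hM : IsMoorePenrose (G.lapMatrix ℝ) M) :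
    M a a - 2 * M a b + M b b ≠ 1 ∧
      IsMoorePenrose ((G.deleteEdges {s(a, b)}).lapMatrix ℝ)
        (M + (1 / (1 - (M a a - 2 * M a b + M b b))) •
          (M * Matrix.vecMulVec ((Pi.single a 1 - Pi.single b 1 : V → ℝ))
            ((Pi.single a 1 - Pi.single b 1 : V → ℝ)) * M)) := by
  obtain ⟨h1, h2, h3, h4⟩ := hM
  set w : V → ℝ := Pi.single a 1 - Pi.single b 1 with hwdef
  set L : Matrix V V ℝ := G.lapMatrix ℝ with hLdef
  set r : ℝ := M a a - 2 * M a b + M b b with hrdef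
  set W : Matrix V V ℝ := Matrix.vecMulVec w w with hWdef
  have hLsymm : Lᵀ = L := G.isSymm_lapMatrix (R := ℝ)
  have hMsymm : Mᵀ = M := mp_symm L M hLsymm ⟨h1, h2, h3, h4⟩
  have hcomm : M * L = L * M := by
    rw [← h4, Matrix.transpose_mul, hLsymm, hMsymm]
  have hba : M b a = M a b := congrFun (congrFun hMsymm a) b
  -- kernel of L
  have hkerG : ∀ x : V → ℝ, L *ᵥ x = 0 → ∀ i j, x i = x j := by
    intro x hx i j
    have hx' : Matrix.toLin' (G.lapMatrix ℝ) x = 0 := by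
      rw [Matrix.toLin'_apply]; exact hx
    exact (G.lapMatrix_mulVec_eq_zero_iff_forall_reachable (x := x)).mp (by rwa [Matrix.toLin'_apply] at hx') i j
      (hG.preconnected i j)
  have hdotw : ∀ x : V → ℝ, w ⬝ᵥ x = x a - x b := by
    intro x
    simp [hwdef, sub_dotProduct, single_dotProduct]
  have hwx : ∀ x, L *ᵥ x = 0 → w ⬝ᵥ x = 0 := by
    intro x hx
    rw [hdotw, hkerG x hx a b, sub_self]
  obtain ⟨z, hz⟩ := exists_mulVec_eq L hLsymm w hwx
  have hMw : M *ᵥ w = fun i => M i a - M i b := by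
    funext i
    simp [hwdef, Matrix.mulVec_sub, Matrix.mulVec_single]
  have hrw : w ⬝ᵥ (M *ᵥ w) = r := by
    rw [hdotw, hMw]
    have h9 : (M a a - M a b) - (M b a - M b b) = r := by rw [hba, hrdef]; ring
    simpa using h9
  have hlap' : (G.deleteEdges {s(a, b)}).lapMatrix ℝ = L - W := lap_delete G a b hab
  have hPw : (L * M) *ᵥ w = w := by
    rw [← hz, Matrix.mulVec_mulVec, h1]
  -- r ≠ 1
  have hrne : r ≠ 1 := by
    intro hr1
    set v : V → ℝ := M *ᵥ w with hvdef
    have h5 : L *ᵥ v = w := by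
      rw [hvdef, Matrix.mulVec_mulVec]; exact hPw
    have h6 : W *ᵥ v = w := by
      rw [hWdef, _root_.vecMulVec_mulVec, hrw, hr1, one_smul]
    have hv0 : ((G.deleteEdges {s(a, b)}).lapMatrix ℝ) *ᵥ v = 0 := by
      rw [hlap', Matrix.sub_mulVec, h5, h6, sub_self]
    have hv0' : Matrix.toLin' ((G.deleteEdges {s(a, b)}).lapMatrix ℝ) v = 0 := by
      rw [Matrix.toLin'_apply]; exact hv0
    have hconst := ((G.deleteEdges {s(a, b)}).lapMatrix_mulVec_eq_zero_iff_forall_reachable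
      (x := v)).mp (by rwa [Matrix.toLin'_apply] at hv0') a b (hG'.preconnected a b)
    have : w ⬝ᵥ v = 0 := by rw [hdotw, hconst, sub_self]
    rw [hvdef, hrw, hr1] at this
    exact one_ne_zero this
  have hr1ne : (1:ℝ) - r ≠ 0 := sub_ne_zero.mpr (Ne.symm hrne)
  set s : ℝ := 1 / (1 - r) with hsdef
  have hWsymm : Wᵀ = W := by
    ext i j
    simp [hWdef, Matrix.vecMulVec_apply, Matrix.transpose_apply, mul_comm]
  have hPW : (L * M) * W = W := by rw [hWdef, _root_.mul_vecMulVec, hPw]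
  have hWP : W * (L * M) = W := by
    have h := congrArg Matrix.transpose hPW
    rwa [Matrix.transpose_mul, hWsymm, h3] at h
  have hPM : (L * M) * M = M := by rw [← hcomm]; exact h2
  have hWMW : W * M * W = r • W := by
    rw [hWdef, _root_.vecMulVec_mul, _root_.vecMulVec_mul_vecMulVec]
    have hvm : w ᵥ* M = M *ᵥ w := by
      conv_lhs => rw [← hMsymm]
      rw [Matrix.vecMul_transpose]
    rw [hvm, dotProduct_comm, hrw]
  have hA : L * (M * W * M) = W * M := by
    rw [← Matrix.mul_assoc, ← Matrix.mul_assoc, hPW]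
  have hB : W * (M * W * M) = r • (W * M) := by
    rw [← Matrix.mul_assoc, ← Matrix.mul_assoc, hWMW, Matrix.smul_mul]
  have hC : (L * M) * (M * W * M) = M * W * M := by
    rw [← Matrix.mul_assoc, ← Matrix.mul_assoc, hPM]
  have hsr : s * r = s - 1 := by
    rw [hsdef]
    field_simp
    ring
  set N : Matrix V V ℝ := M + s • (M * W * M) with hNdef
  have hLN : (L - W) * N = L * M := by
    rw [hNdef, Matrix.sub_mul, Matrix.mul_add, Matrix.mul_add, Matrix.mul_smul, Matrix.mul_smul,
      hA, hB, smul_smul, hsr, sub_smul, one_smul]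
    abel
  have hNsymm : Nᵀ = N := by
    rw [hNdef]
    simp only [Matrix.transpose_add, Matrix.transpose_smul, Matrix.transpose_mul,
      Matrix.transpose_transpose, hMsymm, hWsymm, Matrix.mul_assoc]
  have hL'symm : (L - W)ᵀ = L - W := by rw [Matrix.transpose_sub, hLsymm, hWsymm]
  have hNL : N * (L - W) = L * M := by
    have h := congrArg Matrix.transpose hLN
    rwa [Matrix.transpose_mul, hNsymm, hL'symm, h3] at h
  refine ⟨hrne, ?_⟩
  rw [hlap']
  refine ⟨?_, ?_, ?_, ?_⟩
  · rw [hLN, Matrix.mul_sub, h1, hPW]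
  · rw [hNL, hNdef, Matrix.mul_add, Matrix.mul_smul, hPM, hC]
  · rw [hLN]; exact h3
  · rw [hNL]; exact h3
end
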